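/- For every positive integer n, there exists a bijection φ from the set of permutations of {1,...,n} to itself such that for every permutation w: φ(w)(1) = w(1), nexc(w) = des(φ(w)), and depth(w) = drp(φ(w)). -/

import Mathlib

open Finset

/-- The one-line notation value of `π` at position `k ∈ {1,…,n}`:
`oneLine π k = π(k)` with `1`-indexed positions and values. -/
def oneLine {n : ℕ} (π : Equiv.Perm (Fin n)) (k : ℕ) : ℕ :=
  if h : k - 1 < n then ((π ⟨k - 1, h⟩ : Fin n) : ℕ) + 1 else k

/-- `SUC(π) = {i ∈ {1,…,n-1} : π(i+1) = π(i)+1}` (position set). -/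
def SUC {n : ℕ} (π : Equiv.Perm (Fin n)) : Finset ℕ :=
  (Finset.Icc 1 (n - 1)).filter (fun i => oneLine π (i + 1) = oneLine π i + 1)

/-- `FIX(π) = {i ∈ {1,…,n-1} : π(i) = i}` (position set). -/
def FIX {n : ℕ} (π : Equiv.Perm (Fin n)) : Finset ℕ :=
  (Finset.Icc 1 (n - 1)).filter (fun i => oneLine π i = i)

/-- `Asc₂(π) = {π(i+1) : i ∈ {1,…,n-1}, π(i+1) ≥ π(i)+2}` (value set). -/
def Asc2 {n : ℕ} (π : Equiv.Perm (Fin n)) : Finset ℕ :=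
  ((Finset.Icc 1 (n - 1)).filter (fun i => oneLine π i + 2 ≤ oneLine π (i + 1))).image
    (fun i => oneLine π (i + 1))

/-- `Des(π) = {π(i+1) : i ∈ {1,…,n-1}, π(i) > π(i+1)}` (value set). -/
def DesSet {n : ℕ} (π : Equiv.Perm (Fin n)) : Finset ℕ :=
  ((Finset.Icc 1 (n - 1)).filter (fun i => oneLine π (i + 1) < oneLine π i)).image
    (fun i => oneLine π (i + 1))

/-- `Suc(π) = {π(i+1) : i ∈ {1,…,n-1}, π(i+1) = π(i)+1}` (value set). -/
def SucSet {n : ℕ} (π : Equiv.Perm (Fin n)) : Finset ℕ :=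
  ((Finset.Icc 1 (n - 1)).filter (fun i => oneLine π (i + 1) = oneLine π i + 1)).image
    (fun i => oneLine π (i + 1))

/-- `Aexc(π) = {π(i) : i ∈ {2,…,n}, π(i) < i}` (value set). -/
def Aexc {n : ℕ} (π : Equiv.Perm (Fin n)) : Finset ℕ :=
  ((Finset.Icc 2 n).filter (fun i => oneLine π i < i)).image (fun i => oneLine π i)

/-- `Êxc(π) = {π(i) : i ∈ {2,…,n}, π(i) > i}` (value set). -/
def ExcHat {n : ℕ} (π : Equiv.Perm (Fin n)) : Finset ℕ :=
  ((Finset.Icc 2 n).filter (fun i => i < oneLine π i)).image (fun i => oneLine π i)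

/-- `F̂ix(π) = {π(i) : i ∈ {2,…,n}, π(i) = i}` (value set). -/
def FixHat {n : ℕ} (π : Equiv.Perm (Fin n)) : Finset ℕ :=
  ((Finset.Icc 2 n).filter (fun i => oneLine π i = i)).image (fun i => oneLine π i)

/-- `depth(π) = ∑_{i : π(i) > i} (π(i) − i)`. -/
def depthStat {n : ℕ} (π : Equiv.Perm (Fin n)) : ℕ :=
  ∑ i ∈ (Finset.Icc 1 n).filter (fun i => i < oneLine π i), (oneLine π i - i)

/-- `drp(π) = ∑_{i ∈ {1,…,n-1} : π(i) > π(i+1)} (π(i) − π(i+1))`. -/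
def drpStat {n : ℕ} (π : Equiv.Perm (Fin n)) : ℕ :=
  ∑ i ∈ (Finset.Icc 1 (n - 1)).filter (fun i => oneLine π (i + 1) < oneLine π i),
    (oneLine π i - oneLine π (i + 1))

/-- `exc(π) = |{i ∈ {1,…,n} : π(i) > i}|`. -/
def excNum {n : ℕ} (π : Equiv.Perm (Fin n)) : ℕ :=
  ((Finset.Icc 1 n).filter (fun i => i < oneLine π i)).card

/-- `nexc(π) = |{i ∈ {1,…,n} : π(i) < i}|`. -/
def nexcNum {n : ℕ} (π : Equiv.Perm (Fin n)) : ℕ :=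
  ((Finset.Icc 1 n).filter (fun i => oneLine π i < i)).card

/-- `des(π) = |{i ∈ {1,…,n-1} : π(i) > π(i+1)}|`. -/
def desNum {n : ℕ} (π : Equiv.Perm (Fin n)) : ℕ :=
  ((Finset.Icc 1 (n - 1)).filter (fun i => oneLine π (i + 1) < oneLine π i)).card

/-- `asc(π) = |{i ∈ {1,…,n-1} : π(i) < π(i+1)}|`. -/
def ascNum {n : ℕ} (π : Equiv.Perm (Fin n)) : ℕ :=
  ((Finset.Icc 1 (n - 1)).filter (fun i => oneLine π i < oneLine π (i + 1))).card

/-- `inv(π) = |{(i,j) : 1 ≤ i < j ≤ n, π(i) > π(j)}|`. -/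
def invNum {n : ℕ} (π : Equiv.Perm (Fin n)) : ℕ :=
  (((Finset.Icc 1 n) ×ˢ (Finset.Icc 1 n)).filter
    (fun p : ℕ × ℕ => p.1 < p.2 ∧ oneLine π p.2 < oneLine π p.1)).card


namespace Stmt11

open scoped Classical

variable {n : ℕ}

/-- the element/position `0` of `Fin n` (representing `1`). -/
def z (hn : 0 < n) : Fin n := ⟨0, hn⟩

/-- successor with wraparound -/
def nxt (hn : 0 < n) (i : Fin n) : Fin n := ⟨((i : ℕ) + 1) % n, Nat.mod_lt _ hn⟩

lemma nxt_val {hn : 0 < n} {i : Fin n} (h : (i : ℕ) + 1 < n) :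
    (nxt hn i : ℕ) = (i : ℕ) + 1 := Nat.mod_eq_of_lt h

variable (hn : 0 < n) (v : Equiv.Perm (Fin n))

/-- `i` is the starting position of a block of `v`. -/
def IsStart (i : Fin n) : Prop :=
  i = z hn ∨ (v⁻¹ (z hn) < i ∧ ∀ j, v⁻¹ (z hn) < j → j < i → v j < v i)

lemma isStart_z : IsStart hn v (z hn) := Or.inl rfl

lemma lt_of_isStart {s : Fin n} (hs : IsStart hn v s) (hne : s ≠ z hn) :
    v⁻¹ (z hn) < s := by
  rcases hs with h | h
  · exact absurd h hne
  · exact h.1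

/-- the start of the block containing `i`. -/
noncomputable def bs (i : Fin n) : Fin n :=
  (Finset.univ.filter (fun s => IsStart hn v s ∧ s ≤ i)).max'
    ⟨z hn, by
      simp only [Finset.mem_filter, Finset.mem_univ, true_and]
      exact ⟨isStart_z hn v, by simp [Fin.le_def, z]⟩⟩

lemma bs_isStart (i : Fin n) : IsStart hn v (bs hn v i) := by
  have := Finset.max'_mem (Finset.univ.filter (fun s => IsStart hn v s ∧ s ≤ i))
    ⟨z hn, by
      simp only [Finset.mem_filter, Finset.mem_univ, true_and]
      exact ⟨isStart_z hn v, by simp [Fin.le_def, z]⟩⟩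
  rw [Finset.mem_filter] at this
  exact this.2.1

lemma bs_le (i : Fin n) : bs hn v i ≤ i := by
  have := Finset.max'_mem (Finset.univ.filter (fun s => IsStart hn v s ∧ s ≤ i))
    ⟨z hn, by
      simp only [Finset.mem_filter, Finset.mem_univ, true_and]
      exact ⟨isStart_z hn v, by simp [Fin.le_def, z]⟩⟩
  rw [Finset.mem_filter] at this
  exact this.2.2

lemma le_bs {s i : Fin n} (hs : IsStart hn v s) (h : s ≤ i) : s ≤ bs hn v i :=
  Finset.le_max' _ s (by simp only [Finset.mem_filter, Finset.mem_univ, true_and]; exact ⟨hs, h⟩)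

lemma bs_of_isStart {s : Fin n} (hs : IsStart hn v s) : bs hn v s = s :=
  le_antisymm (bs_le hn v s) (le_bs hn v hs le_rfl)

lemma bs_of_le_p {i : Fin n} (h : i ≤ v⁻¹ (z hn)) : bs hn v i = z hn := by
  by_contra hne
  have h1 : v⁻¹ (z hn) < bs hn v i := lt_of_isStart hn v (bs_isStart hn v i) hne
  exact absurd ((bs_le hn v i).trans h) (not_le_of_gt h1)

lemma isStart_nxt_p (h : ((v⁻¹ (z hn) : Fin n) : ℕ) + 1 < n) :
    IsStart hn v (nxt hn (v⁻¹ (z hn))) := by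
  refine Or.inr ⟨?_, ?_⟩
  · rw [Fin.lt_def, nxt_val h]; omega
  · intro j h1 h2
    rw [Fin.lt_def] at h1
    rw [Fin.lt_def, nxt_val h] at h2
    omega

lemma p_lt_bs {t : Fin n} (h : v⁻¹ (z hn) < t) : v⁻¹ (z hn) < bs hn v t := by
  have hlt : ((v⁻¹ (z hn) : Fin n) : ℕ) + 1 < n := by
    rw [Fin.lt_def] at h; omega
  have h1 : nxt hn (v⁻¹ (z hn)) ≤ bs hn v t := by
    apply le_bs hn v (isStart_nxt_p hn v hlt)
    rw [Fin.le_def, nxt_val hlt]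
    rw [Fin.lt_def] at h; omega
  rw [Fin.lt_def] at h ⊢
  have := Fin.le_def.mp h1
  rw [nxt_val hlt] at this
  omega

lemma val_le_bs : ∀ m : ℕ, ∀ t : Fin n, (t : ℕ) ≤ m → v⁻¹ (z hn) < t → v t ≤ v (bs hn v t) := by
  intro m
  induction m with
  | zero => intro t ht hpt; rw [Fin.lt_def] at hpt; omega
  | succ m ih =>
    intro t ht hpt
    by_cases hst : IsStart hn v t
    · rw [bs_of_isStart hn v hst]
    · have htz : t ≠ z hn := by
        intro h; rw [h] at hpt; rw [Fin.lt_def] at hpt; simp [z] at hpt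
      rw [IsStart] at hst
      push_neg at hst
      obtain ⟨j, hpj, hjt, hvjt⟩ := hst.2 hpt
      have hjne : v t ≠ v j := fun h => (ne_of_lt hjt) (v.injective h).symm
      have hvtj : v t < v j := lt_of_le_of_ne hvjt hjne
      set s := bs hn v t with hs
      have hps : v⁻¹ (z hn) < s := p_lt_bs hn v hpt
      rcases lt_or_ge j s with hjs | hsj
      · -- j < s : start property of s gives v j < v s
        have hsz : s ≠ z hn := by
          intro h; rw [h] at hps; rw [Fin.lt_def] at hps; simp [z] at hps
        rcases bs_isStart hn v t with h | h
        · exact absurd h hsz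
        · exact le_of_lt (hvtj.trans (h.2 j hpj hjs))
      · -- s ≤ j
        have hbsj : bs hn v j = s := by
          apply le_antisymm
          · exact le_bs hn v (bs_isStart hn v j) ((bs_le hn v j).trans (le_of_lt hjt))
          · exact le_bs hn v (bs_isStart hn v t) hsj
        rcases eq_or_lt_of_le hsj with heq | hlt
        · rw [heq]; exact le_of_lt hvtj
        · have : v j ≤ v (bs hn v j) := by
            apply ih j _ hpj
            rw [Fin.lt_def] at hjt; omega
          rw [hbsj] at this
          exact le_of_lt (lt_of_lt_of_le hvtj this)

lemma val_le_bs' {t : Fin n} (h : v⁻¹ (z hn) < t) : v t ≤ v (bs hn v t) :=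
  val_le_bs hn v (t : ℕ) t le_rfl h


/-- the block-rotation map on positions. -/
noncomputable def ftau (i : Fin n) : Fin n :=
  if (i : ℕ) + 1 < n ∧ ¬ IsStart hn v (nxt hn i) then nxt hn i else bs hn v i

lemma ftau_injective : Function.Injective (ftau hn v) := by
  intro a b hab
  unfold ftau at hab
  by_cases ha : (a : ℕ) + 1 < n ∧ ¬ IsStart hn v (nxt hn a) <;>
  by_cases hb : (b : ℕ) + 1 < n ∧ ¬ IsStart hn v (nxt hn b)
  · rw [if_pos ha, if_pos hb] at hab
    have := congrArg Fin.val hab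
    rw [nxt_val ha.1, nxt_val hb.1] at this
    exact Fin.ext (by omega)
  · rw [if_pos ha, if_neg hb] at hab
    exact absurd (hab ▸ bs_isStart hn v b) ha.2
  · rw [if_neg ha, if_pos hb] at hab
    exact absurd (hab ▸ bs_isStart hn v a) hb.2
  · rw [if_neg ha, if_neg hb] at hab
    -- a and b are block ends of same block; show a = b
    rcases lt_trichotomy a b with h | h | h
    · exfalso
      -- a < b. a is end: a+1 = n ∨ IsStart (nxt a). Since a < b < n, a+1 < n.
      have ha1 : (a : ℕ) + 1 < n := by
        have := b.isLt; rw [Fin.lt_def] at h; omega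
      have hsa : IsStart hn v (nxt hn a) := by
        by_contra hc; exact ha ⟨ha1, hc⟩
      -- nxt a is a start ≤ b, so bs b ≥ nxt a > a ≥ bs a
      have h1 : nxt hn a ≤ bs hn v b :=
        le_bs hn v hsa (by rw [Fin.le_def, nxt_val ha1]; rw [Fin.lt_def] at h; omega)
      have h2 : bs hn v a ≤ a := bs_le hn v a
      rw [hab] at h2
      rw [Fin.le_def, nxt_val ha1] at h1
      rw [Fin.le_def] at h2
      omega
    · exact h
    · exfalso
      have hb1 : (b : ℕ) + 1 < n := by
        have := a.isLt; rw [Fin.lt_def] at h; omega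
      have hsb : IsStart hn v (nxt hn b) := by
        by_contra hc; exact hb ⟨hb1, hc⟩
      have h1 : nxt hn b ≤ bs hn v a :=
        le_bs hn v hsb (by rw [Fin.le_def, nxt_val hb1]; rw [Fin.lt_def] at h; omega)
      have h2 : bs hn v b ≤ b := bs_le hn v b
      rw [← hab] at h2
      rw [Fin.le_def, nxt_val hb1] at h1
      rw [Fin.le_def] at h2
      omega

/-- the block rotation as a permutation. -/
noncomputable def tauP : Equiv.Perm (Fin n) :=
  Equiv.ofBijective _ (Finite.injective_iff_bijective.mp (ftau_injective hn v))

lemma tauP_apply (i : Fin n) : tauP hn v i = ftau hn v i := rfl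

/-- the desired map `ψ`. -/
noncomputable def psi : Equiv.Perm (Fin n) := v * tauP hn v * v⁻¹

lemma psi_apply (i : Fin n) : psi hn v (v i) = v (ftau hn v i) := by
  simp [psi, Equiv.Perm.mul_apply, tauP_apply]

lemma not_descent_start {i : Fin n} (h : (i : ℕ) + 1 < n)
    (hs : IsStart hn v (nxt hn i)) : ¬ v (nxt hn i) < v i := by
  intro hlt
  rcases hs with hz | ⟨h1, h2⟩
  · have := congrArg Fin.val hz
    rw [nxt_val h] at this; simp [z] at this
  · rcases lt_trichotomy (v⁻¹ (z hn)) i with hpi | hpi | hpi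
    · exact absurd hlt (not_lt_of_gt (h2 i hpi (by rw [Fin.lt_def, nxt_val h]; omega)))
    · rw [← hpi] at hlt
      rw [(show ∀ y, v (v⁻¹ y) = y from v.apply_symm_apply)] at hlt
      rw [Fin.lt_def] at hlt; simp [z] at hlt
    · rw [Fin.lt_def, nxt_val h] at h1
      rw [Fin.lt_def] at hpi
      omega

lemma not_descent_bs {i : Fin n} (hc : ¬ ((i : ℕ) + 1 < n ∧ ¬ IsStart hn v (nxt hn i))) :
    ¬ v (bs hn v i) < v i := by
  rcases lt_trichotomy i (v⁻¹ (z hn)) with hip | hip | hip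
  · exfalso
    apply hc
    have h1 : (i : ℕ) + 1 < n := by
      have := (v⁻¹ (z hn)).isLt; rw [Fin.lt_def] at hip; omega
    refine ⟨h1, ?_⟩
    intro hs
    rcases hs with hz | ⟨hp1, _⟩
    · have := congrArg Fin.val hz
      rw [nxt_val h1] at this; simp [z] at this
    · rw [Fin.lt_def, nxt_val h1] at hp1
      rw [Fin.lt_def] at hip
      omega
  · rw [hip, (show ∀ y, v (v⁻¹ y) = y from v.apply_symm_apply)]
    intro hlt
    rw [Fin.lt_def] at hlt; simp [z] at hlt
  · exact not_lt_of_ge (val_le_bs' hn v hip)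

lemma descent_iff (i : Fin n) :
    v (ftau hn v i) < v i ↔ ((i : ℕ) + 1 < n ∧ v (nxt hn i) < v i) := by
  unfold ftau
  by_cases hc : (i : ℕ) + 1 < n ∧ ¬ IsStart hn v (nxt hn i)
  · rw [if_pos hc]
    exact ⟨fun h => ⟨hc.1, h⟩, fun h => h.2⟩
  · rw [if_neg hc]
    constructor
    · intro h; exact absurd h (not_descent_bs hn v hc)
    · rintro ⟨h1, h2⟩
      have hs : IsStart hn v (nxt hn i) := by
        by_contra hns; exact hc ⟨h1, hns⟩
      exact absurd h2 (not_descent_start hn v h1 hs)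

lemma ftau_of_descent {i : Fin n} (h1 : (i : ℕ) + 1 < n) (h2 : v (nxt hn i) < v i) :
    ftau hn v i = nxt hn i := by
  unfold ftau
  rw [if_pos ⟨h1, fun hs => absurd h2 (not_descent_start hn v h1 hs)⟩]

lemma ftau_p : ftau hn v (v⁻¹ (z hn)) = z hn := by
  unfold ftau
  rw [if_neg, bs_of_le_p hn v le_rfl]
  rintro ⟨h1, h2⟩
  exact h2 (isStart_nxt_p hn v h1)

lemma psi_z : psi hn v (z hn) = v (z hn) := by
  have h : psi hn v (v (v⁻¹ (z hn))) = v (z hn) := by rw [psi_apply, ftau_p]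
  simpa using h

/-- Fin-level descent set of `v`. -/
noncomputable def DFin : Finset (Fin n) :=
  Finset.univ.filter (fun i : Fin n => (i : ℕ) + 1 < n ∧ v (nxt hn i) < v i)

/-- Fin-level non-excedance (value) set of `w`. -/
noncomputable def NFin (w : Equiv.Perm (Fin n)) : Finset (Fin n) :=
  Finset.univ.filter (fun x : Fin n => w x < x)

/-- Fin-level excedance (value) set of `w`. -/
noncomputable def EFin (w : Equiv.Perm (Fin n)) : Finset (Fin n) :=
  Finset.univ.filter (fun x : Fin n => x < w x)

lemma mem_DFin {i : Fin n} : i ∈ DFin hn v ↔ ((i : ℕ) + 1 < n ∧ v (nxt hn i) < v i) := by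
  simp [DFin]

lemma mem_NFin {w : Equiv.Perm (Fin n)} {x : Fin n} : x ∈ NFin w ↔ w x < x := by simp [NFin]

lemma psi_apply_of_mem_DFin {i : Fin n} (hi : i ∈ DFin hn v) :
    psi hn v (v i) = v (nxt hn i) := by
  rw [mem_DFin] at hi
  rw [psi_apply, ftau_of_descent hn v hi.1 hi.2]

lemma card_NFin : (NFin (psi hn v)).card = (DFin hn v).card := by
  refine (Finset.card_bij (fun i _ => v i) ?_ ?_ ?_).symm
  · intro i hi
    rw [mem_NFin, psi_apply_of_mem_DFin hn v hi]
    exact ((mem_DFin hn v).mp hi).2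
  · intro a ha b hb hab
    exact v.injective hab
  · intro x hx
    rw [mem_NFin] at hx
    refine ⟨v⁻¹ x, ?_, by simp⟩
    have hx' : psi hn v (v (v⁻¹ x)) < v (v⁻¹ x) := by simpa using hx
    rw [psi_apply] at hx'
    rw [descent_iff] at hx'
    exact (mem_DFin hn v).mpr hx'

lemma sum_NFin :
    ∑ x ∈ NFin (psi hn v), ((x : ℕ) - ((psi hn v) x : ℕ)) =
      ∑ i ∈ DFin hn v, ((v i : ℕ) - (v (nxt hn i) : ℕ)) := by
  refine (Finset.sum_bij (fun i _ => v i) ?_ ?_ ?_ ?_).symm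
  · intro i hi
    rw [mem_NFin, psi_apply_of_mem_DFin hn v hi]
    exact ((mem_DFin hn v).mp hi).2
  · intro a ha b hb hab
    exact v.injective hab
  · intro x hx
    rw [mem_NFin] at hx
    refine ⟨v⁻¹ x, ?_, by simp⟩
    have hx' : psi hn v (v (v⁻¹ x)) < v (v⁻¹ x) := by simpa using hx
    rw [psi_apply] at hx'
    rw [descent_iff] at hx'
    exact (mem_DFin hn v).mpr hx'
  · intro i hi
    rw [psi_apply_of_mem_DFin hn v hi]

/-- excedance sum equals non-excedance sum. -/
lemma sum_EFin_eq_sum_NFin (w : Equiv.Perm (Fin n)) :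
    ∑ x ∈ EFin w, ((w x : ℕ) - (x : ℕ)) = ∑ x ∈ NFin w, ((x : ℕ) - (w x : ℕ)) := by
  have key : ∑ x : Fin n, ((w x : ℤ) - (x : ℤ)) = 0 := by
    rw [Finset.sum_sub_distrib]
    rw [Equiv.sum_comp w (fun x : Fin n => (x : ℤ))]
    simp
  have hsplit : ∑ x : Fin n, ((w x : ℤ) - (x : ℤ)) =
      ∑ x ∈ EFin w, ((w x : ℤ) - (x : ℤ)) + ∑ x ∈ NFin w, ((w x : ℤ) - (x : ℤ)) := by
    rw [← Finset.sum_filter_add_sum_filter_not Finset.univ (fun x : Fin n => x < w x)]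
    congr 1
    rw [← Finset.sum_filter_add_sum_filter_not
      (Finset.univ.filter (fun x : Fin n => ¬ x < w x)) (fun x : Fin n => w x < x)]
    have h2 : ∑ x ∈ (Finset.univ.filter (fun x : Fin n => ¬ x < w x)).filter
        (fun x : Fin n => ¬ w x < x), ((w x : ℤ) - (x : ℤ)) = 0 := by
      apply Finset.sum_eq_zero
      intro x hx
      simp only [Finset.mem_filter] at hx
      have : w x = x := le_antisymm (not_lt.mp hx.1.2) (not_lt.mp hx.2)
      rw [this]; ring
    rw [h2, add_zero]
    congr 1
    · ext x
      simp only [NFin, Finset.mem_filter, Finset.mem_univ, true_and]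
      constructor
      · rintro ⟨h1, h2⟩; exact h2
      · intro h; exact ⟨not_lt_of_gt h, h⟩
  have hE : ∑ x ∈ EFin w, ((w x : ℤ) - (x : ℤ)) =
      ((∑ x ∈ EFin w, ((w x : ℕ) - (x : ℕ)) : ℕ) : ℤ) := by
    rw [Nat.cast_sum]
    apply Finset.sum_congr rfl
    intro x hx
    simp only [EFin, Finset.mem_filter, Finset.mem_univ, true_and, Fin.lt_def] at hx
    omega
  have hN : ∑ x ∈ NFin w, ((w x : ℤ) - (x : ℤ)) =
      -((∑ x ∈ NFin w, ((x : ℕ) - (w x : ℕ)) : ℕ) : ℤ) := by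
    rw [Nat.cast_sum, ← Finset.sum_neg_distrib]
    apply Finset.sum_congr rfl
    intro x hx
    simp only [NFin, Finset.mem_filter, Finset.mem_univ, true_and, Fin.lt_def] at hx
    omega
  rw [hsplit, hE, hN] at key
  omega

/-- `1`-indexed position `a ∈ {1,…,n}` as an element of `Fin n`. -/
def toFin (hn : 0 < n) (a : ℕ) : Fin n := ⟨(a - 1) % n, Nat.mod_lt _ hn⟩

lemma toFin_val {hn : 0 < n} {a : ℕ} (h2 : a ≤ n) : (toFin hn a : ℕ) = a - 1 :=
  Nat.mod_eq_of_lt (by omega)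

lemma toFin_coe {hn : 0 < n} (x : Fin n) : toFin hn ((x : ℕ) + 1) = x :=
  Fin.ext (by rw [toFin_val (by omega)]; omega)

lemma oneLine_eq (w : Equiv.Perm (Fin n)) {k : ℕ} (h1 : 1 ≤ k) (h2 : k ≤ n) :
    oneLine w k = (w ⟨k - 1, by omega⟩ : ℕ) + 1 := dif_pos (by omega)

lemma oneLine_toFin {hn : 0 < n} (w : Equiv.Perm (Fin n)) {k : ℕ} (h1 : 1 ≤ k) (h2 : k ≤ n) :
    oneLine w k = (w (toFin hn k) : ℕ) + 1 := by
  rw [oneLine_eq w h1 h2]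
  have h0 : toFin hn k = ⟨k - 1, by omega⟩ := Fin.ext (by rw [toFin_val h2])
  rw [h0]

lemma nxt_toFin {hn : 0 < n} {a : ℕ} (h1 : 1 ≤ a) (h2 : a < n) :
    nxt hn (toFin hn a) = toFin hn (a + 1) := by
  apply Fin.ext
  show ((toFin hn a : ℕ) + 1) % n = (a + 1 - 1) % n
  rw [toFin_val (le_of_lt h2)]
  congr 1
  omega

lemma nexcNum_eq (w : Equiv.Perm (Fin n)) (hn : 0 < n) : nexcNum w = (NFin w).card := by
  refine Finset.card_nbij' (toFin hn) (fun x => (x : ℕ) + 1) ?_ ?_ ?_ ?_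
  · intro a ha
    simp only [nexcNum, Finset.mem_coe, Finset.mem_filter, Finset.mem_Icc] at ha
    obtain ⟨⟨h1, h2⟩, h3⟩ := ha
    rw [oneLine_toFin (hn := hn) w h1 h2] at h3
    rw [Finset.mem_coe, mem_NFin, Fin.lt_def, toFin_val h2]
    omega
  · intro x hx
    rw [Finset.mem_coe, mem_NFin, Fin.lt_def] at hx
    have hxn := x.isLt
    simp only [nexcNum, Finset.mem_coe, Finset.mem_filter, Finset.mem_Icc]
    refine ⟨⟨by omega, by omega⟩, ?_⟩
    rw [oneLine_toFin (hn := hn) w (by omega) (by omega), toFin_coe]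
    omega
  · intro a ha
    simp only [nexcNum, Finset.mem_coe, Finset.mem_filter, Finset.mem_Icc] at ha
    show (toFin hn a : ℕ) + 1 = a
    rw [toFin_val ha.1.2]
    omega
  · intro x _
    exact toFin_coe x

lemma desNum_eq : desNum v = (DFin hn v).card := by
  have hn1 : n - 1 < n := by omega
  refine Finset.card_nbij' (toFin hn) (fun x => (x : ℕ) + 1) ?_ ?_ ?_ ?_
  · intro a ha
    simp only [desNum, Finset.mem_coe, Finset.mem_filter, Finset.mem_Icc] at ha
    obtain ⟨⟨h1, h2⟩, h3⟩ := ha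
    rw [oneLine_toFin (hn := hn) v h1 (by omega),
      oneLine_toFin (hn := hn) v (by omega) (by omega : a + 1 ≤ n)] at h3
    rw [Finset.mem_coe, mem_DFin, toFin_val (by omega), Fin.lt_def, nxt_toFin h1 (by omega)]
    exact ⟨by omega, by omega⟩
  · intro x hx
    rw [Finset.mem_coe, mem_DFin] at hx
    obtain ⟨h1, h2⟩ := hx
    rw [Fin.lt_def] at h2
    simp only [desNum, Finset.mem_coe, Finset.mem_filter, Finset.mem_Icc]
    refine ⟨⟨by omega, by omega⟩, ?_⟩
    rw [oneLine_toFin (hn := hn) v (by omega) (by omega),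
      oneLine_toFin (hn := hn) v (by omega) (by omega : (x : ℕ) + 1 ≤ n), toFin_coe]
    rw [show (x : ℕ) + 1 + 1 = ((x : ℕ) + 1) + 1 from rfl, ← nxt_toFin (by omega) (by omega),
      toFin_coe]
    omega
  · intro a ha
    simp only [desNum, Finset.mem_coe, Finset.mem_filter, Finset.mem_Icc] at ha
    show (toFin hn a : ℕ) + 1 = a
    rw [toFin_val (by omega : a ≤ n)]
    omega
  · intro x _
    exact toFin_coe x

lemma depthStat_eq (w : Equiv.Perm (Fin n)) (hn : 0 < n) :
    depthStat w = ∑ x ∈ EFin w, ((w x : ℕ) - (x : ℕ)) := by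
  refine Finset.sum_nbij' (toFin hn) (fun x => (x : ℕ) + 1) ?_ ?_ ?_ ?_ ?_
  · intro a ha
    simp only [depthStat, Finset.mem_filter, Finset.mem_Icc] at ha
    obtain ⟨⟨h1, h2⟩, h3⟩ := ha
    rw [oneLine_toFin (hn := hn) w h1 h2] at h3
    simp only [EFin, Finset.mem_filter, Finset.mem_univ, true_and, Fin.lt_def, toFin_val h2]
    omega
  · intro x hx
    simp only [EFin, Finset.mem_filter, Finset.mem_univ, true_and, Fin.lt_def] at hx
    have hxn := x.isLt
    simp only [depthStat, Finset.mem_filter, Finset.mem_Icc]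
    refine ⟨⟨by omega, by omega⟩, ?_⟩
    rw [oneLine_toFin (hn := hn) w (by omega) (by omega), toFin_coe]
    omega
  · intro a ha
    simp only [depthStat, Finset.mem_filter, Finset.mem_Icc] at ha
    show (toFin hn a : ℕ) + 1 = a
    rw [toFin_val ha.1.2]
    omega
  · intro x _
    exact toFin_coe x
  · intro a ha
    simp only [depthStat, Finset.mem_filter, Finset.mem_Icc] at ha
    obtain ⟨⟨h1, h2⟩, h3⟩ := ha
    rw [oneLine_toFin (hn := hn) w h1 h2, toFin_val h2]
    omega

lemma drpStat_eq : drpStat v = ∑ i ∈ DFin hn v, ((v i : ℕ) - (v (nxt hn i) : ℕ)) := by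
  refine Finset.sum_nbij' (toFin hn) (fun x => (x : ℕ) + 1) ?_ ?_ ?_ ?_ ?_
  · intro a ha
    simp only [drpStat, Finset.mem_filter, Finset.mem_Icc] at ha
    obtain ⟨⟨h1, h2⟩, h3⟩ := ha
    rw [oneLine_toFin (hn := hn) v h1 (by omega),
      oneLine_toFin (hn := hn) v (by omega) (by omega : a + 1 ≤ n)] at h3
    rw [mem_DFin, toFin_val (by omega), Fin.lt_def, nxt_toFin h1 (by omega)]
    exact ⟨by omega, by omega⟩
  · intro x hx
    rw [mem_DFin] at hx
    obtain ⟨h1, h2⟩ := hx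
    rw [Fin.lt_def] at h2
    simp only [drpStat, Finset.mem_filter, Finset.mem_Icc]
    refine ⟨⟨by omega, by omega⟩, ?_⟩
    rw [oneLine_toFin (hn := hn) v (by omega) (by omega),
      oneLine_toFin (hn := hn) v (by omega) (by omega : (x : ℕ) + 1 ≤ n), toFin_coe]
    rw [show (x : ℕ) + 1 + 1 = ((x : ℕ) + 1) + 1 from rfl, ← nxt_toFin (by omega) (by omega),
      toFin_coe]
    omega
  · intro a ha
    simp only [drpStat, Finset.mem_filter, Finset.mem_Icc] at ha
    show (toFin hn a : ℕ) + 1 = a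
    rw [toFin_val (by omega : a ≤ n)]
    omega
  · intro x _
    exact toFin_coe x
  · intro a ha
    simp only [drpStat, Finset.mem_filter, Finset.mem_Icc] at ha
    obtain ⟨⟨h1, h2⟩, h3⟩ := ha
    rw [oneLine_toFin (hn := hn) v h1 (by omega),
      oneLine_toFin (hn := hn) v (by omega) (by omega : a + 1 ≤ n),
      ← nxt_toFin h1 (by omega)]
    omega

lemma oneLine_psi_one : oneLine (psi hn v) 1 = oneLine v 1 := by
  rw [oneLine_eq (psi hn v) le_rfl hn, oneLine_eq v le_rfl hn]
  have h0 : (⟨1 - 1, by omega⟩ : Fin n) = z hn := rfl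
  rw [h0, psi_z]

/-- Main statistics lemma for `psi`. -/
lemma psi_stats :
    oneLine (psi hn v) 1 = oneLine v 1 ∧ nexcNum (psi hn v) = desNum v ∧
      depthStat (psi hn v) = drpStat v := by
  refine ⟨oneLine_psi_one hn v, ?_, ?_⟩
  · rw [nexcNum_eq (psi hn v) hn, desNum_eq hn v, card_NFin hn v]
  · rw [depthStat_eq (psi hn v) hn, drpStat_eq hn v, sum_EFin_eq_sum_NFin, sum_NFin hn v]

lemma isStart_bs_eq {t s : Fin n} (h : bs hn v t = s) : IsStart hn v s := h ▸ bs_isStart hn v t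

lemma bs_ftau {t s : Fin n} (hbt : bs hn v t = s) : bs hn v (ftau hn v t) = s := by
  have hs : IsStart hn v s := isStart_bs_eq hn v hbt
  unfold ftau
  by_cases hc : (t : ℕ) + 1 < n ∧ ¬ IsStart hn v (nxt hn t)
  · rw [if_pos hc]
    apply le_antisymm
    · -- bs (nxt t) ≤ s
      have h1 : bs hn v (nxt hn t) ≠ nxt hn t := by
        intro he
        exact hc.2 (he ▸ bs_isStart hn v (nxt hn t))
      have h2 : bs hn v (nxt hn t) ≤ t := by
        have h3 := bs_le hn v (nxt hn t)
        rw [Fin.le_def, nxt_val hc.1] at h3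
        rw [Fin.le_def]
        rcases lt_or_eq_of_le h3 with h4 | h4
        · omega
        · exact absurd (Fin.ext (h4.trans (nxt_val hc.1).symm)) h1
      rw [← hbt]
      exact le_bs hn v (bs_isStart hn v (nxt hn t)) h2
    · -- s ≤ bs (nxt t)
      apply le_bs hn v hs
      have h3 : s ≤ t := hbt ▸ bs_le hn v t
      rw [Fin.le_def] at h3 ⊢
      rw [nxt_val hc.1]
      omega
  · rw [if_neg hc, hbt]
    exact bs_of_isStart hn v hs

lemma bs_tauP_pow {s : Fin n} (hs : IsStart hn v s) :
    ∀ j : ℕ, bs hn v ((tauP hn v ^ j) s) = s := by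
  intro j
  induction j with
  | zero => simpa using bs_of_isStart hn v hs
  | succ j ih =>
    rw [pow_succ', Equiv.Perm.mul_apply, tauP_apply]
    exact bs_ftau hn v ih

/-- the end of the block starting at `s`. -/
noncomputable def be (s : Fin n) (hs : IsStart hn v s) : Fin n :=
  (Finset.univ.filter (fun t => bs hn v t = s)).max'
    ⟨s, by simp [bs_of_isStart hn v hs]⟩

lemma bs_be {s : Fin n} (hs : IsStart hn v s) : bs hn v (be hn v s hs) = s := by
  have := Finset.max'_mem (Finset.univ.filter (fun t => bs hn v t = s))
    ⟨s, by simp [bs_of_isStart hn v hs]⟩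
  rw [Finset.mem_filter] at this
  exact this.2

lemma le_be {s t : Fin n} (hs : IsStart hn v s) (h : bs hn v t = s) : t ≤ be hn v s hs :=
  Finset.le_max' _ t (by simp [h])


lemma interval_bs {s t : Fin n} (hs : IsStart hn v s) (h1 : s ≤ t)
    (h2 : t ≤ be hn v s hs) : bs hn v t = s :=
  le_antisymm
    ((le_bs hn v (bs_isStart hn v t) ((bs_le hn v t).trans h2)).trans_eq (bs_be hn v hs))
    (le_bs hn v hs h1)

lemma exists_pow_eq {s t : Fin n} (hs : IsStart hn v s) (hbt : bs hn v t = s) :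
    ∃ j : ℕ, (tauP hn v ^ j) s = t := by
  have hst : s ≤ t := hbt ▸ bs_le hn v t
  have key : ∀ d : ℕ, ∀ t : Fin n, bs hn v t = s → (t : ℕ) = (s : ℕ) + d →
      ∃ j : ℕ, (tauP hn v ^ j) s = t := by
    intro d
    induction d with
    | zero => intro t _ hd; exact ⟨0, by simpa using (Fin.ext hd.symm : s = t)⟩
    | succ d ih =>
      intro t hbt hd
      have htn := t.isLt
      set t' : Fin n := ⟨(t : ℕ) - 1, by omega⟩ with ht'
      have hbt' : bs hn v t' = s := by
        apply interval_bs hn v hs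
        · rw [Fin.le_def]; show (s : ℕ) ≤ (t : ℕ) - 1; omega
        · exact le_trans (by rw [Fin.le_def]; show ((t:ℕ) - 1) ≤ (t:ℕ); omega)
            (le_be hn v hs hbt)
      obtain ⟨j, hj⟩ := ih t' hbt' (by show (t:ℕ) - 1 = s + d; omega)
      refine ⟨j + 1, ?_⟩
      rw [pow_succ', Equiv.Perm.mul_apply, hj, tauP_apply]
      have h1 : (t' : ℕ) + 1 < n := by show (t:ℕ) - 1 + 1 < n; omega
      have h2 : nxt hn t' = t := Fin.ext (by rw [nxt_val h1]; show (t:ℕ) - 1 + 1 = t; omega)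
      have hns : ¬ IsStart hn v (nxt hn t') := by
        rw [h2]
        intro hst'
        have h3 : bs hn v t = t := bs_of_isStart hn v hst'
        rw [hbt] at h3
        have := congrArg Fin.val h3
        omega
      unfold ftau
      rw [if_pos ⟨h1, hns⟩, h2]
  exact key ((t : ℕ) - (s : ℕ)) t hbt (by rw [Fin.le_def] at hst; omega)

lemma psi_pow (j : ℕ) : (psi hn v) ^ j = v * (tauP hn v) ^ j * v⁻¹ := conj_pow ..

lemma sameCycle_iff {s x : Fin n} (hs : IsStart hn v s) :
    (psi hn v).SameCycle (v s) x ↔ ∃ t, bs hn v t = s ∧ x = v t := by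
  constructor
  · intro h
    obtain ⟨j, -, hj⟩ := h.exists_pow_eq'
    rw [psi_pow, Equiv.Perm.mul_apply, Equiv.Perm.mul_apply, (show ∀ y, v⁻¹ (v y) = y from v.symm_apply_apply)] at hj
    exact ⟨(tauP hn v ^ j) s, bs_tauP_pow hn v hs j, hj.symm⟩
  · rintro ⟨t, hbt, rfl⟩
    obtain ⟨j, hj⟩ := exists_pow_eq hn v hs hbt
    refine ⟨(j : ℤ), ?_⟩
    rw [zpow_natCast, psi_pow, Equiv.Perm.mul_apply, Equiv.Perm.mul_apply,
      (show ∀ y, v⁻¹ (v y) = y from v.symm_apply_apply), hj]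

/-- candidate set: unseen elements that are maximal in their `w`-cycle. -/
noncomputable def cand (w : Equiv.Perm (Fin n)) (S : Finset (Fin n)) : Finset (Fin n) :=
  Finset.univ.filter (fun x => x ∉ S ∧ ∀ y, w.SameCycle x y → y ≤ x)

lemma start_min {s : Fin n} (hs : IsStart hn v s) (hps : v⁻¹ (z hn) < s) :
    v s ∈ cand (psi hn v) ((Finset.univ.filter (fun t : Fin n => t < s)).image v) ∧
      ∀ x ∈ cand (psi hn v) ((Finset.univ.filter (fun t : Fin n => t < s)).image v), v s ≤ x := by
  constructor
  · simp only [cand, Finset.mem_filter, Finset.mem_univ, true_and, Finset.mem_image]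
    constructor
    · rintro ⟨t, ht, hvt⟩
      exact absurd (v.injective hvt ▸ ht) (lt_irrefl s)
    · intro y hy
      obtain ⟨t, hbt, rfl⟩ := (sameCycle_iff hn v hs).mp hy
      have hst : s ≤ t := hbt ▸ bs_le hn v t
      rcases eq_or_lt_of_le hst with rfl | hlt
      · exact le_rfl
      · have := val_le_bs' hn v (hps.trans hlt)
        rw [hbt] at this
        exact this
  · intro x hx
    simp only [cand, Finset.mem_filter, Finset.mem_univ, true_and, Finset.mem_image] at hx
    obtain ⟨hxS, hcm⟩ := hx
    set t := v⁻¹ x with ht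
    have hxt : x = v t := by rw [ht, (show ∀ y, v (v⁻¹ y) = y from v.apply_symm_apply)]
    have hst : s ≤ t := by
      by_contra hc
      exact hxS ⟨t, by simp [not_le.mp hc], hxt.symm⟩
    have hss' : s ≤ bs hn v t := le_bs hn v hs hst
    rcases eq_or_lt_of_le hss' with heq | hlt
    · -- same block
      have : (psi hn v).SameCycle (v s) x := (sameCycle_iff hn v hs).mpr ⟨t, heq.symm, hxt⟩
      exact hcm (v s) this.symm
    · -- x lives in a later block, with larger start value
      set s' := bs hn v t with hs'
      have hs'start : IsStart hn v s' := bs_isStart hn v t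
      have hvss' : v s < v s' := by
        rcases hs'start with hz | ⟨h1, h2⟩
        · exfalso
          rw [hz, Fin.lt_def] at hlt
          simp [z] at hlt
        · exact h2 s hps hlt
      have hvs'x : v s' ≤ x := by
        have : (psi hn v).SameCycle (v s') x :=
          (sameCycle_iff hn v hs'start).mpr ⟨t, rfl, hxt⟩
        exact hcm (v s') this.symm
      exact le_of_lt (lt_of_lt_of_le hvss' hvs'x)

lemma isStart_iff_mem {i : Fin n} (h1 : (i : ℕ) + 1 < n) :
    IsStart hn v (nxt hn i) ↔
      psi hn v (v i) ∈ (Finset.univ.filter (fun t : Fin n => t ≤ i)).image v := by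
  rw [psi_apply]
  unfold ftau
  by_cases hc : (i : ℕ) + 1 < n ∧ ¬ IsStart hn v (nxt hn i)
  · rw [if_pos hc]
    constructor
    · intro h; exact absurd h hc.2
    · intro h
      rw [Finset.mem_image] at h
      obtain ⟨t, ht, hvt⟩ := h
      rw [Finset.mem_filter] at ht
      have he := v.injective hvt
      have h2 : nxt hn i ≤ i := he ▸ ht.2
      rw [Fin.le_def, nxt_val h1] at h2
      omega
  · have hst : IsStart hn v (nxt hn i) := by
      by_contra hns; exact hc ⟨h1, hns⟩
    rw [if_neg hc]
    refine ⟨fun _ => ?_, fun _ => hst⟩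
    rw [Finset.mem_image]
    exact ⟨bs hn v i, by simp [bs_le hn v i], rfl⟩

lemma psi_injective : Function.Injective (psi hn : Equiv.Perm (Fin n) → Equiv.Perm (Fin n)) := by
  intro v u h
  have key : ∀ m : ℕ, ∀ hm : m < n, v ⟨m, hm⟩ = u ⟨m, hm⟩ := by
    intro m
    induction m using Nat.strong_induction_on with
    | _ m ih =>
      intro hm
      cases m with
      | zero =>
        have hz : (⟨0, hm⟩ : Fin n) = z hn := rfl
        rw [hz, ← psi_z hn v, ← psi_z hn u, h]
      | succ k =>
        set i : Fin n := ⟨k, by omega⟩ with hi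
        set s : Fin n := ⟨k + 1, hm⟩ with hsdef
        have hnxt : nxt hn i = s := Fin.ext (Nat.mod_eq_of_lt hm)
        have hk1 : (i : ℕ) + 1 < n := hm
        have hvu_le : ∀ t : Fin n, t ≤ i → v t = u t := by
          intro t ht
          have h1 := ih (t : ℕ) (by have hik : (i : ℕ) = k := rfl; rw [Fin.le_def] at ht; omega) t.isLt
          simpa [Fin.eta] using h1
        have hvi : v i = u i := hvu_le i le_rfl
        have hS : (Finset.univ.filter (fun t : Fin n => t ≤ i)).image v =
            (Finset.univ.filter (fun t : Fin n => t ≤ i)).image u := by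
          apply Finset.image_congr
          intro t ht
          simp only [Finset.coe_filter, Set.mem_setOf_eq, Finset.mem_univ, true_and] at ht
          exact hvu_le t ht
        have hcrit : IsStart hn v s ↔ IsStart hn u s := by
          rw [← hnxt, isStart_iff_mem hn v hk1, isStart_iff_mem hn u hk1, h, hvi, hS]
        by_cases hst : IsStart hn v s
        · -- start case : both are the min of the same candidate set
          have hsu : IsStart hn u s := hcrit.mp hst
          have hsz : s ≠ z hn := by
            intro hc
            have := congrArg Fin.val hc
            simp [z] at this
          have hps_v : v⁻¹ (z hn) < s := lt_of_isStart hn v hst hsz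
          have hps_u : u⁻¹ (z hn) < s := lt_of_isStart hn u hsu hsz
          have hmin_v := start_min hn v hst hps_v
          have hmin_u := start_min hn u hsu hps_u
          have hlt_le : (Finset.univ.filter (fun t : Fin n => t < s)) =
              (Finset.univ.filter (fun t : Fin n => t ≤ i)) := by
            apply Finset.filter_congr
            intro t _
            rw [Fin.lt_def, Fin.le_def]
            show (t : ℕ) < k + 1 ↔ (t : ℕ) ≤ k
            omega
          have hSlt : (Finset.univ.filter (fun t : Fin n => t < s)).image v =
              (Finset.univ.filter (fun t : Fin n => t < s)).image u := by
            rw [hlt_le, hS]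
          rw [h, hSlt] at hmin_v
          exact le_antisymm (hmin_v.2 (u s) hmin_u.1) (hmin_u.2 (v s) hmin_v.1)
        · -- non-start case : v s = psi v (v i)
          have hsu : ¬ IsStart hn u s := fun hc => hst (hcrit.mpr hc)
          have hv : psi hn v (v i) = v s := by
            rw [psi_apply]
            unfold ftau
            rw [if_pos ⟨hk1, by rw [hnxt]; exact hst⟩, hnxt]
          have hu : psi hn u (u i) = u s := by
            rw [psi_apply]
            unfold ftau
            rw [if_pos ⟨hk1, by rw [hnxt]; exact hsu⟩, hnxt]
          rw [← hv, ← hu, h, hvi]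
  apply Equiv.ext
  intro x
  have := key (x : ℕ) x.isLt
  simpa [Fin.eta] using this

end Stmt11

/-- there is a bijection φ of 𝔖ₙ preserving the first letter with
nexc(w) = des(φ(w)) and depth(w) = drp(φ(w)). -/
theorem stmt11 (n : ℕ) (hn : 0 < n) :
    ∃ φ : Equiv.Perm (Fin n) → Equiv.Perm (Fin n), Function.Bijective φ ∧
      ∀ w : Equiv.Perm (Fin n),
        oneLine (φ w) 1 = oneLine w 1 ∧
        nexcNum w = desNum (φ w) ∧
        depthStat w = drpStat (φ w) := by
  classical
  let e : Equiv.Perm (Fin n) ≃ Equiv.Perm (Fin n) :=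
    Equiv.ofBijective (Stmt11.psi hn)
      (Finite.injective_iff_bijective.mp (Stmt11.psi_injective hn))
  refine ⟨e.symm, e.symm.bijective, ?_⟩
  intro w
  have hw : Stmt11.psi hn (e.symm w) = w := e.apply_symm_apply w
  obtain ⟨h1, h2, h3⟩ := Stmt11.psi_stats hn (e.symm w)
  rw [hw] at h1 h2 h3
  exact ⟨h1.symm, h2, h3⟩
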